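/- Suppose b_K < ∞ and write b = b_K. Fix θ ∈ ℝ and let G(κ) = inf{w ∈ ℝ : F^T_{θ,ς²}(w) ≥ κ} denote the κ-quantile function of TN(θ, ς², T). Then, as κ increases to 1, (b − G(κ))·φ((b−θ)/ς) / [(1−κ)·ς·P(V ∈ T)] → 1, where V ~ N(θ, ς²); equivalently, b − G(κ) = (1−κ)·ς·P(V ∈ T)/φ((b−θ)/ς)·(1 + o(1)) as κ ↗ 1. -/

import Mathlib

open Filter MeasureTheory ProbabilityTheory Set

/-- The cdf of the normal distribution with mean `θ` and variance `ς²`, truncated to the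
set `T`: `F^T_{θ,ς²}(w) = P(V ≤ w ∧ V ∈ T) / P(V ∈ T)` for `V ~ N(θ, ς²)`. -/
noncomputable def truncNormalCDF (ς : ℝ) (T : Set ℝ) (θ w : ℝ) : ℝ :=
  ((gaussianReal θ (Real.toNNReal (ς ^ 2))) (Set.Iic w ∩ T)).toReal /
    ((gaussianReal θ (Real.toNNReal (ς ^ 2))) T).toReal

/-- The standard normal density `φ(t) = (2π)^{−1/2} exp(−t²/2)`. -/
noncomputable def stdNormalPDF (t : ℝ) : ℝ :=
  (Real.sqrt (2 * Real.pi))⁻¹ * Real.exp (-(t ^ 2) / 2)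

/-- Suppose `b_K < ∞`, write `b` for it, fix `θ ∈ ℝ`, and let
`G(κ) = inf {w : F^T_{θ,ς²}(w) ≥ κ}` be the `κ`-quantile function of `TN(θ,ς²,T)`.
Then `(b − G(κ))·φ((b−θ)/ς) / ((1−κ)·ς·P(V ∈ T)) → 1` as `κ ↗ 1`, where
`V ~ N(θ,ς²)`. -/
theorem stmt_17
    (ς : ℝ) (hς : 0 < ς) (K : ℕ) (hK : 1 ≤ K) (a b : ℕ → EReal)
    (hab : ∀ i < K, a i < b i) (hba : ∀ i, i + 1 < K → b i < a (i + 1))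
    (T : Set ℝ)
    (hT : T = ⋃ i ∈ Finset.range K, {x : ℝ | a i < (x : EReal) ∧ (x : EReal) < b i})
    (hbK : b (K - 1) ≠ ⊤) (θ : ℝ) (G : ℝ → ℝ)
    (hG : ∀ κ : ℝ, G κ = sInf {w : ℝ | κ ≤ truncNormalCDF ς T θ w}) :
    Tendsto
      (fun κ : ℝ =>
        ((b (K - 1)).toReal - G κ) * stdNormalPDF (((b (K - 1)).toReal - θ) / ς) /
          ((1 - κ) * ς * ((gaussianReal θ (Real.toNNReal (ς ^ 2))) T).toReal))
      (nhdsWithin 1 (Set.Iio 1)) (nhds 1) := by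
  have hv : Real.toNNReal (ς ^ 2) ≠ 0 := by
    simp only [ne_eq, Real.toNNReal_eq_zero, not_le]
    positivity
  set v : NNReal := Real.toNNReal (ς ^ 2) with hv_def
  set μ := gaussianReal θ v with hμ_def
  set ρ : ℝ → ℝ := gaussianPDFReal θ v with hρ_def
  set bb : ℝ := (b (K - 1)).toReal with hbb_def
  have hK1 : K - 1 < K := Nat.sub_lt hK one_pos
  have hab' := hab (K - 1) hK1
  have hbne_bot : b (K - 1) ≠ ⊥ := (bot_le.trans_lt hab').ne'
  have hbcoe : ((bb : ℝ) : EReal) = b (K - 1) := EReal.coe_toReal hbK hbne_bot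
  -- monotonicity of the left endpoints
  have ha_mono : ∀ i j : ℕ, i ≤ j → j < K → a i ≤ a j := by
    intro i j hij hj
    induction j with
    | zero =>
      have : i = 0 := Nat.le_zero.mp hij
      simp [this]
    | succ n ih =>
      rcases Nat.lt_or_ge i (n + 1) with h | h
      · have h1 : a i ≤ a n := ih (Nat.lt_succ_iff.mp h) (Nat.lt_of_succ_lt hj)
        exact h1.trans (le_of_lt ((hab n (Nat.lt_of_succ_lt hj)).trans (hba n hj)))
      · have : i = n + 1 := le_antisymm hij h
        rw [this]
  have hb_le_a : ∀ i : ℕ, i + 1 < K → b i ≤ a (K - 1) := by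
    intro i hi
    have h1 : b i < a (i + 1) := hba i hi
    have h2 : a (i + 1) ≤ a (K - 1) :=
      ha_mono (i + 1) (K - 1) (Nat.le_sub_one_of_lt hi) hK1
    exact (h1.trans_le h2).le
  have hbi_le : ∀ i : ℕ, i < K → b i ≤ b (K - 1) := by
    intro i hi
    rcases eq_or_ne i (K - 1) with h | h
    · rw [h]
    · have hilt : i < K - 1 := lt_of_le_of_ne (Nat.le_sub_one_of_lt hi) h
      have : i + 1 < K := by omega
      exact (hb_le_a i this).trans hab'.le
  -- a real point strictly inside the last interval
  obtain ⟨c, hc1, hc2'⟩ := EReal.exists_between_coe_real hab'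
  have hcb : c < bb := by
    rw [← EReal.coe_lt_coe_iff, hbcoe]; exact hc2'
  -- measurability of T
  have hTmeas : MeasurableSet T := by
    rw [hT]
    refine Finset.measurableSet_biUnion _ (fun i _ => ?_)
    have : {x : ℝ | a i < (x : EReal) ∧ (x : EReal) < b i}
        = (fun x : ℝ => (x : EReal)) ⁻¹' (Set.Ioo (a i) (b i)) := rfl
    rw [this]
    exact measurable_coe_real_ereal measurableSet_Ioo
  -- T is below bb
  have hT_sub : T ⊆ Iic bb := by
    rw [hT]
    intro x hx
    simp only [Set.mem_iUnion, Finset.mem_range, exists_prop, Set.mem_setOf_eq] at hx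
    obtain ⟨i, hi, _, h2⟩ := hx
    have : (x : EReal) < ((bb : ℝ) : EReal) := by
      rw [hbcoe]; exact h2.trans_le (hbi_le i hi)
    exact (EReal.coe_lt_coe_iff.mp this).le
  have hIoo_sub : Set.Ioo c bb ⊆ T := by
    intro x hx
    rw [hT]
    simp only [Set.mem_iUnion, Finset.mem_range, exists_prop, Set.mem_setOf_eq]
    refine ⟨K - 1, hK1, ?_, ?_⟩
    · exact hc1.trans (EReal.coe_lt_coe_iff.mpr hx.1)
    · rw [← hbcoe]; exact EReal.coe_lt_coe_iff.mpr hx.2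
  have hT_inter : ∀ w : ℝ, c ≤ w → T ∩ Set.Ioi w = Set.Ioo w bb := by
    intro w hw
    ext x
    constructor
    · rintro ⟨hxT, hxw⟩
      rw [hT] at hxT
      simp only [Set.mem_iUnion, Finset.mem_range, exists_prop, Set.mem_setOf_eq] at hxT
      obtain ⟨i, hi, h1, h2⟩ := hxT
      rcases eq_or_ne i (K - 1) with h | h
      · refine ⟨hxw, ?_⟩
        rw [← EReal.coe_lt_coe_iff, hbcoe]
        rw [h] at h2; exact h2
      · have hilt : i + 1 < K := by
          have : i < K - 1 := lt_of_le_of_ne (Nat.le_sub_one_of_lt hi) h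
          omega
        exfalso
        have hxa : (x : EReal) < a (K - 1) := h2.trans_le (hb_le_a i hilt)
        have hwx : (w : EReal) < (x : EReal) := EReal.coe_lt_coe_iff.mpr hxw
        have hcw : ((c : ℝ) : EReal) ≤ (w : EReal) := EReal.coe_le_coe_iff.mpr hw
        exact absurd (hxa.trans (hc1.trans_le (hcw.trans hwx.le))) (lt_irrefl _)
    · intro hx
      exact ⟨hIoo_sub ⟨lt_of_le_of_lt hw hx.1, hx.2⟩, hx.1⟩
  -- the measure as an integral of the density
  have key : ∀ s : Set ℝ, (μ s).toReal = ∫ x in s, ρ x := by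
    intro s
    rw [hμ_def, gaussianReal_apply_eq_integral θ hv s, ENNReal.toReal_ofReal]
    exact integral_nonneg fun x => gaussianPDFReal_nonneg θ v x
  have hρ_cont : Continuous ρ := by
    rw [hρ_def, gaussianPDFReal_def]
    fun_prop
  have hρ_int : Integrable ρ := integrable_gaussianPDFReal θ v
  have hρ_pos : ∀ x, 0 < ρ x := fun x => gaussianPDFReal_pos θ v x hv
  have hμfin : ∀ s : Set ℝ, μ s ≠ ⊤ := fun s => measure_ne_top μ s
  set Ψ : ℝ → ℝ := fun w => ∫ x in w..bb, ρ x with hΨ_def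
  have hΨ_pos : ∀ w, w < bb → 0 < Ψ w := fun w hw =>
    intervalIntegral.intervalIntegral_pos_of_pos hρ_int.intervalIntegrable hρ_pos hw
  have hμT_pos : 0 < (μ T).toReal := by
    have h1 : 0 < (μ (Set.Ioo c bb)).toReal := by
      rw [key, ← MeasureTheory.integral_Ioc_eq_integral_Ioo,
        ← intervalIntegral.integral_of_le hcb.le]
      exact hΨ_pos c hcb
    exact h1.trans_le (ENNReal.toReal_mono (hμfin T) (measure_mono hIoo_sub))
  have hμT_ne : (μ T).toReal ≠ 0 := ne_of_gt hμT_pos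
  have hsplit : ∀ w : ℝ,
      (μ T).toReal = (μ (Set.Iic w ∩ T)).toReal + (μ (T ∩ Set.Ioi w)).toReal := by
    intro w
    have hdis : Disjoint (Set.Iic w ∩ T) (T ∩ Set.Ioi w) := by
      rw [Set.disjoint_left]
      rintro x ⟨hx1, _⟩ ⟨_, hx2⟩
      exact absurd (Set.mem_Ioi.mp hx2) (not_lt.mpr hx1)
    have hun : Set.Iic w ∩ T ∪ T ∩ Set.Ioi w = T := by
      ext x
      constructor
      · rintro (⟨_, h⟩ | ⟨h, _⟩) <;> exact h
      · intro hx
        rcases le_or_gt x w with h | h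
        · exact Or.inl ⟨h, hx⟩
        · exact Or.inr ⟨hx, h⟩
    conv_lhs => rw [← hun]
    rw [measure_union hdis (hTmeas.inter measurableSet_Ioi),
      ENNReal.toReal_add (hμfin _) (hμfin _)]
  have hF : ∀ w : ℝ, truncNormalCDF ς T θ w = (μ (Set.Iic w ∩ T)).toReal / (μ T).toReal :=
    fun w => rfl
  have hFone : ∀ w : ℝ, c ≤ w → w ≤ bb →
      1 - truncNormalCDF ς T θ w = Ψ w / (μ T).toReal := by
    intro w h1 h2
    have h3 : (μ (T ∩ Set.Ioi w)).toReal = Ψ w := by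
      rw [hT_inter w h1, key, ← MeasureTheory.integral_Ioc_eq_integral_Ioo,
        ← intervalIntegral.integral_of_le h2]
    rw [hF, eq_div_iff hμT_ne, sub_mul, one_mul, div_mul_cancel₀ _ hμT_ne, ← h3, hsplit w]
    ring
  have hFmono : Monotone (truncNormalCDF ς T θ) := by
    intro w1 w2 h
    rw [hF, hF]
    refine (div_le_div_iff_of_pos_right hμT_pos).mpr ?_
    exact ENNReal.toReal_mono (hμfin _)
      (measure_mono (Set.inter_subset_inter_left T (Set.Iic_subset_Iic.mpr h)))
  have hFcont : Continuous (truncNormalCDF ς T θ) := by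
    have hg_int : Integrable (T.indicator ρ) := hρ_int.indicator hTmeas
    have hnum : ∀ w : ℝ, (μ (Set.Iic w ∩ T)).toReal
        = (∫ x in Set.Iic (0:ℝ), T.indicator ρ x)
          + ∫ x in (0:ℝ)..w, T.indicator ρ x := by
      intro w
      have e1 : (μ (Set.Iic w ∩ T)).toReal = ∫ x in Set.Iic w, T.indicator ρ x := by
        rw [key, ← setIntegral_indicator hTmeas]
      rw [e1, ← intervalIntegral.integral_Iic_sub_Iic hg_int.integrableOn hg_int.integrableOn]
      ring
    have hc : Continuous fun w : ℝ =>
        ((∫ x in Set.Iic (0:ℝ), T.indicator ρ x) + ∫ x in (0:ℝ)..w, T.indicator ρ x)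
          / (μ T).toReal :=
      (continuous_const.add
        (intervalIntegral.continuous_primitive (fun _ _ => hg_int.intervalIntegrable) 0)).div_const _
    exact hc.congr fun w => by rw [hF, hnum]
  have hF_lt_one : ∀ w : ℝ, c ≤ w → w < bb → truncNormalCDF ς T θ w < 1 := by
    intro w h1 h2
    have h3 := hFone w h1 h2.le
    have h4 : 0 < Ψ w / (μ T).toReal := div_pos (hΨ_pos w h2) hμT_pos
    linarith
  have hF_bb : truncNormalCDF ς T θ bb = 1 := by
    rw [hF, Set.inter_eq_right.mpr hT_sub]
    exact div_self hμT_ne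
  -- a point strictly between c and bb
  set c' : ℝ := (c + bb) / 2 with hc'_def
  have hc'1 : c < c' := by rw [hc'_def]; linarith
  have hc'2 : c' < bb := by rw [hc'_def]; linarith
  set κ0 : ℝ := truncNormalCDF ς T θ c' with hκ0_def
  have hκ0 : κ0 < 1 := hF_lt_one c' hc'1.le hc'2
  -- lower bound on G
  have hlb : ∀ u : ℝ, ∀ κ : ℝ, truncNormalCDF ς T θ u < κ → κ < 1 → u ≤ G κ := by
    intro u κ hu hκ
    rw [hG κ]
    refine le_csInf ⟨bb, ?_⟩ ?_
    · simp only [Set.mem_setOf_eq, hF_bb]; exact hκ.le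
    · intro w hw
      by_contra h
      push_neg at h
      have : truncNormalCDF ς T θ w ≤ truncNormalCDF ς T θ u := hFmono h.le
      simp only [Set.mem_setOf_eq] at hw
      linarith
  -- key per-κ properties of G
  have hGfacts : ∀ κ : ℝ, κ0 < κ → κ < 1 →
      c' ≤ G κ ∧ G κ < bb ∧ truncNormalCDF ς T θ (G κ) = κ := by
    intro κ hκa hκb
    have hbbS : bb ∈ {w : ℝ | κ ≤ truncNormalCDF ς T θ w} := by
      simp only [Set.mem_setOf_eq, hF_bb]; exact hκb.le
    have hlower : ∀ w ∈ {w : ℝ | κ ≤ truncNormalCDF ς T θ w}, c' ≤ w := by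
      intro w hw
      by_contra h
      push_neg at h
      have h1 : truncNormalCDF ς T θ w ≤ κ0 := hFmono h.le
      simp only [Set.mem_setOf_eq] at hw
      linarith
    have hbdd : BddBelow {w : ℝ | κ ≤ truncNormalCDF ς T θ w} := ⟨c', hlower⟩
    have hne : {w : ℝ | κ ≤ truncNormalCDF ς T θ w}.Nonempty := ⟨bb, hbbS⟩
    have hGbb : G κ ≤ bb := by rw [hG κ]; exact csInf_le hbdd hbbS
    have hGc' : c' ≤ G κ := by rw [hG κ]; exact le_csInf hne hlower
    have hclosed : IsClosed {w : ℝ | κ ≤ truncNormalCDF ς T θ w} :=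
      isClosed_Ici.preimage hFcont
    have hmem : G κ ∈ {w : ℝ | κ ≤ truncNormalCDF ς T θ w} := by
      rw [hG κ]; exact hclosed.csInf_mem hne hbdd
    have hge : κ ≤ truncNormalCDF ς T θ (G κ) := hmem
    have hle : truncNormalCDF ς T θ (G κ) ≤ κ := by
      have hev : ∀ᶠ w in nhdsWithin (G κ) (Set.Iio (G κ)),
          truncNormalCDF ς T θ w ≤ κ := by
        filter_upwards [self_mem_nhdsWithin] with w hw
        by_contra h
        push_neg at h
        have : G κ ≤ w := by
          rw [hG κ]; exact csInf_le hbdd h.le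
        exact absurd hw (not_lt.mpr this)
      exact le_of_tendsto ((hFcont.tendsto (G κ)).mono_left nhdsWithin_le_nhds) hev
    have hFG : truncNormalCDF ς T θ (G κ) = κ := le_antisymm hle hge
    have hGlt : G κ < bb := by
      refine lt_of_le_of_ne hGbb fun h => ?_
      rw [h, hF_bb] at hFG
      exact absurd hFG.symm (ne_of_lt hκb)
    exact ⟨hGc', hGlt, hFG⟩
  -- G tends to bb from below
  have hG_tendsto : Tendsto G (nhdsWithin 1 (Set.Iio 1)) (nhdsWithin bb (Set.Iio bb)) := by
    rw [tendsto_nhdsWithin_iff]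
    constructor
    · rw [tendsto_order]
      constructor
      · intro x hx
        set w1 : ℝ := (max x c' + bb) / 2 with hw1_def
        have hmaxlt : max x c' < bb := max_lt hx hc'2
        have hw1a : max x c' < w1 := by rw [hw1_def]; linarith
        have hw1b : w1 < bb := by rw [hw1_def]; linarith
        have hw1c : c ≤ w1 := le_of_lt (lt_of_lt_of_le hc'1
          ((le_max_right x c').trans hw1a.le))
        have hFw1 : truncNormalCDF ς T θ w1 < 1 := hF_lt_one w1 hw1c hw1b
        have hm : max (truncNormalCDF ς T θ w1) κ0 < 1 := max_lt hFw1 hκ0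
        filter_upwards [Ioo_mem_nhdsLT hm] with κ hκ
        obtain ⟨hκa, hκb⟩ := hκ
        have h1 : truncNormalCDF ς T θ w1 < κ := lt_of_le_of_lt (le_max_left _ _) hκa
        have h2 : w1 ≤ G κ := hlb w1 κ h1 hκb
        exact lt_of_le_of_lt (le_max_left x c') (hw1a.trans_le h2)
      · intro x hx
        filter_upwards [Ioo_mem_nhdsLT hκ0] with κ hκ
        exact ((hGfacts κ hκ.1 hκ.2).2.1).trans hx
    · filter_upwards [Ioo_mem_nhdsLT hκ0] with κ hκ
      exact (hGfacts κ hκ.1 hκ.2).2.1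
  -- the density is positive at bb and FTC gives the slope limit
  have hρbb : 0 < ρ bb := hρ_pos bb
  have hΨderiv : HasDerivAt Ψ (-ρ bb) bb :=
    intervalIntegral.integral_hasDerivAt_left hρ_int.intervalIntegrable
      (hρ_cont.stronglyMeasurable.stronglyMeasurableAtFilter)
      hρ_cont.continuousAt
  have hslope : Tendsto (fun w => Ψ w / (bb - w)) (nhdsWithin bb (Set.Iio bb)) (nhds (ρ bb)) := by
    rw [hasDerivAt_iff_tendsto_slope] at hΨderiv
    have h2 : Tendsto (fun w => -(slope Ψ bb w)) (nhdsWithin bb {bb}ᶜ) (nhds (ρ bb)) := by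
      simpa using hΨderiv.neg
    have h3 : Tendsto (fun w => -(slope Ψ bb w)) (nhdsWithin bb (Set.Iio bb)) (nhds (ρ bb)) :=
      h2.mono_left (nhdsWithin_mono _ fun x hx => ne_of_lt hx)
    refine h3.congr fun w => ?_
    have hΨbb : Ψ bb = 0 := intervalIntegral.integral_same
    rw [slope_def_field, hΨbb, sub_zero, show bb - w = -(w - bb) by ring, div_neg]
  have hr : Tendsto (fun w => (bb - w) * ρ bb / Ψ w) (nhdsWithin bb (Set.Iio bb)) (nhds 1) := by
    have h1 : Tendsto (fun w => ρ bb / (Ψ w / (bb - w))) (nhdsWithin bb (Set.Iio bb))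
        (nhds (ρ bb / ρ bb)) := tendsto_const_nhds.div hslope (ne_of_gt hρbb)
    rw [div_self (ne_of_gt hρbb)] at h1
    refine h1.congr fun w => ?_
    rw [div_div_eq_mul_div, mul_comm]
  -- relation between the standard normal pdf and the gaussian density
  have hvcoe : ((v : ℝ)) = ς ^ 2 := Real.coe_toNNReal _ (sq_nonneg ς)
  have hstd : stdNormalPDF ((bb - θ) / ς) = ς * ρ bb := by
    rw [hρ_def, gaussianPDFReal_def]
    simp only [stdNormalPDF]
    rw [hvcoe]
    have hsqrt : Real.sqrt (2 * Real.pi * ς ^ 2) = Real.sqrt (2 * Real.pi) * ς := by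
      rw [Real.sqrt_mul (by positivity) (ς ^ 2), Real.sqrt_sq hς.le]
    rw [hsqrt]
    have hexp : -(((bb - θ) / ς) ^ 2) / 2 = -(bb - θ) ^ 2 / (2 * ς ^ 2) := by
      rw [div_pow]
      ring
    rw [hexp, mul_inv]
    have h2 : Real.sqrt (2 * Real.pi) ≠ 0 := by positivity
    field_simp
  -- final assembly
  have hcomp : Tendsto (fun κ => (bb - G κ) * ρ bb / Ψ (G κ))
      (nhdsWithin 1 (Set.Iio 1)) (nhds 1) := hr.comp hG_tendsto
  refine hcomp.congr' ?_
  filter_upwards [Ioo_mem_nhdsLT hκ0] with κ hκ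
  obtain ⟨hgc', hglt, hFG⟩ := hGfacts κ hκ.1 hκ.2
  have h1κ : 1 - κ = Ψ (G κ) / (μ T).toReal := by
    have := hFone (G κ) ((hc'1.le).trans hgc') hglt.le
    rw [hFG] at this
    exact this
  have hΨG : Ψ (G κ) ≠ 0 := ne_of_gt (hΨ_pos _ hglt)
  rw [hstd, h1κ]
  have hς' : ς ≠ 0 := ne_of_gt hς
  field_simp
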